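/- arXiv:1403.0386 — 2 statements merged into one kernel-verified Lean document; each statement's English description precedes it below -/
import Mathlib

section
/- For every λ > 1 and every integer n ≥ 1, m_{2n}(λ) = (λ^{4n} − 1)^{−1} · Σ_{j=0}^{n−1} C(2n, 2j) · m_{2j}(λ) · Σ_{l=0}^{n−j} C(2(n−j), 2l) · λ^{2l}. -/
open MeasureTheory ProbabilityTheory Finset

section Stmt5Aux

variable {Ω : Type*} [MeasurableSpace Ω] {P : Measure Ω} [IsProbabilityMeasure P]
  {X : ℕ → Ω → ℝ} {l : ℝ}

lemma coef_eq (l : ℝ) (t : ℕ) : l ^ (-(t + 1 : ℤ)) = l⁻¹ ^ (t + 1) := by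
  rw [inv_pow, ← zpow_natCast l (t + 1), ← zpow_neg]
  norm_num

/-- Partial sums of the series, started at index `s`. -/
noncomputable def QQ (X : ℕ → Ω → ℝ) (l : ℝ) (s N : ℕ) (ω : Ω) : ℝ :=
  ∑ t ∈ Finset.range N, l ^ (-(t + 1 : ℤ)) * X (t + s) ω

lemma ae_pm (hmeas : ∀ n, Measurable (X n)) (h1 : ∀ n, P {ω | X n ω = 1} = 1 / 2)
    (h2 : ∀ n, P {ω | X n ω = -1} = 1 / 2) (n : ℕ) :
    ∀ᵐ ω ∂P, X n ω = 1 ∨ X n ω = -1 := by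
  have hA : MeasurableSet {ω | X n ω = 1} := hmeas n (measurableSet_singleton 1)
  have hB : MeasurableSet {ω | X n ω = -1} := hmeas n (measurableSet_singleton (-1))
  have hd : Disjoint {ω | X n ω = 1} {ω | X n ω = -1} := by
    rw [Set.disjoint_left]
    intro ω h1' h2'
    simp only [Set.mem_setOf_eq] at h1' h2'
    rw [h1'] at h2'; norm_num at h2'
  have hu : P ({ω | X n ω = 1} ∪ {ω | X n ω = -1}) = 1 := by
    rw [measure_union hd hB, h1 n, h2 n]
    rw [one_div, ENNReal.inv_two_add_inv_two]
  have : P ({ω | X n ω = 1} ∪ {ω | X n ω = -1})ᶜ = 0 := by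
    rw [prob_compl_eq_zero_iff (hA.union hB)]; exact hu
  rw [ae_iff]
  have hset : {ω | ¬(X n ω = 1 ∨ X n ω = -1)} = ({ω | X n ω = 1} ∪ {ω | X n ω = -1})ᶜ := by
    ext ω; simp [not_or]
  rw [hset]
  exact this

lemma integral_X (hmeas : ∀ n, Measurable (X n)) (h1 : ∀ n, P {ω | X n ω = 1} = 1 / 2)
    (h2 : ∀ n, P {ω | X n ω = -1} = 1 / 2) (n : ℕ) :
    ∫ ω, X n ω ∂P = 0 := by
  have hA : MeasurableSet {ω | X n ω = 1} := hmeas n (measurableSet_singleton 1)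
  have hB : MeasurableSet {ω | X n ω = -1} := hmeas n (measurableSet_singleton (-1))
  have hae : X n =ᵐ[P] fun ω =>
      ({ω | X n ω = 1}).indicator (fun _ => (1 : ℝ)) ω
        + ({ω | X n ω = -1}).indicator (fun _ => (-1 : ℝ)) ω := by
    filter_upwards [ae_pm hmeas h1 h2 n] with ω hω
    rcases hω with h | h <;>
      simp [Set.indicator_apply, Set.mem_setOf_eq, h] <;> norm_num
  rw [integral_congr_ae hae, integral_add
    ((integrable_const (1 : ℝ)).indicator hA) ((integrable_const (-1 : ℝ)).indicator hB),
    integral_indicator_const _ hA, integral_indicator_const _ hB, measureReal_def, measureReal_def, h1 n, h2 n]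
  norm_num

lemma integral_X_pow (hmeas : ∀ n, Measurable (X n)) (h1 : ∀ n, P {ω | X n ω = 1} = 1 / 2)
    (h2 : ∀ n, P {ω | X n ω = -1} = 1 / 2) (n k : ℕ) :
    ∫ ω, X n ω ^ k ∂P = if Even k then 1 else 0 := by
  by_cases hk : Even k
  · have hae : (fun ω => X n ω ^ k) =ᵐ[P] fun _ => (1 : ℝ) := by
      filter_upwards [ae_pm hmeas h1 h2 n] with ω hω
      rcases hω with h | h <;> simp [h, hk.neg_one_pow]
    rw [integral_congr_ae hae]
    simp [hk]
  · have hae : (fun ω => X n ω ^ k) =ᵐ[P] X n := by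
      filter_upwards [ae_pm hmeas h1 h2 n] with ω hω
      rcases hω with h | h <;>
        simp [h, (Nat.not_even_iff_odd.1 hk).neg_one_pow]
    rw [integral_congr_ae hae, integral_X hmeas h1 h2 n]
    simp [hk]

lemma measurable_QQ (hmeas : ∀ n, Measurable (X n)) (s N : ℕ) :
    Measurable (QQ X l s N) := by
  apply Finset.measurable_sum
  intro t _
  exact measurable_const.mul (hmeas (t + s))

lemma abs_QQ_le (hl : 1 < l) {ω : Ω} (hx : ∀ t, X t ω = 1 ∨ X t ω = -1) (s N : ℕ) :
    |QQ X l s N ω| ≤ (l - 1)⁻¹ := by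
  have hl0 : 0 < l := lt_trans one_pos hl
  have hr0 : 0 ≤ l⁻¹ := inv_nonneg.2 hl0.le
  have hr1 : l⁻¹ < 1 := inv_lt_one_of_one_lt₀ hl
  have hsummable : Summable (fun t : ℕ => l⁻¹ ^ (t + 1)) := by
    simpa [pow_succ'] using (summable_geometric_of_lt_one hr0 hr1).mul_left l⁻¹
  calc |QQ X l s N ω| ≤ ∑ t ∈ Finset.range N, |l ^ (-(t + 1 : ℤ)) * X (t + s) ω| :=
        Finset.abs_sum_le_sum_abs _ _
    _ ≤ ∑ t ∈ Finset.range N, l⁻¹ ^ (t + 1) := by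
        apply Finset.sum_le_sum
        intro t _
        rw [abs_mul]
        have hx1 : |X (t + s) ω| = 1 := by rcases hx (t + s) with h | h <;> simp [h]
        rw [hx1, mul_one]
        rw [coef_eq, abs_of_nonneg (pow_nonneg hr0 _)]
    _ ≤ ∑' t : ℕ, l⁻¹ ^ (t + 1) := Summable.sum_le_tsum _ (fun t _ => pow_nonneg hr0 _) hsummable
    _ = (l - 1)⁻¹ := by
        have h1r : (0:ℝ) < 1 - l⁻¹ := by linarith
        have : ∑' t : ℕ, l⁻¹ ^ (t + 1) = l⁻¹ * (1 - l⁻¹)⁻¹ := by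
          simp_rw [pow_succ']
          rw [tsum_mul_left, tsum_geometric_of_lt_one hr0 hr1]
        rw [this, ← mul_inv]
        congr 1
        field_simp
    
lemma integrable_bdd {f : Ω → ℝ} (hf : AEStronglyMeasurable f P) {C : ℝ}
    (h : ∀ᵐ ω ∂P, |f ω| ≤ C) : Integrable f P :=
  (integrable_const C).mono' hf (by simpa [Real.norm_eq_abs] using h)

lemma ae_pm_all (hmeas : ∀ n, Measurable (X n)) (h1 : ∀ n, P {ω | X n ω = 1} = 1 / 2)
    (h2 : ∀ n, P {ω | X n ω = -1} = 1 / 2) :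
    ∀ᵐ ω ∂P, ∀ t, X t ω = 1 ∨ X t ω = -1 :=
  ae_all_iff.2 (ae_pm hmeas h1 h2)

lemma indepQQ (hmeas : ∀ n, Measurable (X n))
    (hindep : iIndepFun X P) (s N : ℕ) :
    IndepFun (X s) (QQ X l (s + 1) N) P := by
  classical
  set T : Finset ℕ := (Finset.range N).image (fun t => t + (s + 1)) with hT
  have hST : Disjoint ({s} : Finset ℕ) T := by
    simp only [Finset.disjoint_singleton_left, hT, Finset.mem_image, Finset.mem_range]
    rintro ⟨t, -, ht⟩
    omega
  have h := hindep.indepFun_finset {s} T hST hmeas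
  have hs : s ∈ ({s} : Finset ℕ) := Finset.mem_singleton_self s
  have hφ : Measurable (fun v : ({ x // x ∈ ({s} : Finset ℕ) } → ℝ) => v ⟨s, hs⟩) :=
    measurable_pi_apply _
  have hψ : Measurable (fun v : ({ x // x ∈ T } → ℝ) =>
      ∑ t ∈ (Finset.range N).attach,
        l ^ (-(t.1 + 1 : ℤ)) * v ⟨t.1 + (s + 1), Finset.mem_image_of_mem _ t.2⟩) := by
    refine Finset.measurable_sum _ (fun t _ => ?_)
    exact (measurable_pi_apply _).const_mul _
  have key := h.comp hφ hψ
  have e1 : (fun v : ({ x // x ∈ ({s} : Finset ℕ) } → ℝ) => v ⟨s, hs⟩) ∘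
      (fun a (i : ({s} : Finset ℕ)) => X i a) = X s := rfl
  have e2 : (fun v : ({ x // x ∈ T } → ℝ) =>
      ∑ t ∈ (Finset.range N).attach,
        l ^ (-(t.1 + 1 : ℤ)) * v ⟨t.1 + (s + 1), Finset.mem_image_of_mem _ t.2⟩) ∘
      (fun a (i : T) => X i a) = QQ X l (s + 1) N := by
    funext ω
    simp only [Function.comp_apply, QQ]
    exact Finset.sum_attach (Finset.range N)
      (fun t => l ^ (-(t + 1 : ℤ)) * X (t + (s + 1)) ω)
  rwa [e1, e2] at key

lemma integrable_QQ_pow (hl : 1 < l) (hmeas : ∀ n, Measurable (X n))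
    (h1 : ∀ n, P {ω | X n ω = 1} = 1 / 2) (h2 : ∀ n, P {ω | X n ω = -1} = 1 / 2)
    (s N k : ℕ) : Integrable (fun ω => QQ X l s N ω ^ k) P := by
  apply integrable_bdd (((measurable_QQ hmeas s N).pow_const k).aestronglyMeasurable)
    (C := ((l - 1)⁻¹) ^ k)
  filter_upwards [ae_pm_all hmeas h1 h2] with ω hω
  rw [abs_pow]
  exact pow_le_pow_left₀ (abs_nonneg _) (abs_QQ_le hl hω s N) k

lemma integrable_mix (hl : 1 < l) (hmeas : ∀ n, Measurable (X n))
    (h1 : ∀ n, P {ω | X n ω = 1} = 1 / 2) (h2 : ∀ n, P {ω | X n ω = -1} = 1 / 2)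
    (s N i j : ℕ) :
    Integrable (fun ω => X s ω ^ i * QQ X l (s + 1) N ω ^ j) P := by
  apply integrable_bdd ((((hmeas s).pow_const i).mul
    ((measurable_QQ hmeas (s + 1) N).pow_const j)).aestronglyMeasurable)
    (C := ((l - 1)⁻¹) ^ j)
  filter_upwards [ae_pm_all hmeas h1 h2] with ω hω
  simp only [Pi.mul_apply]
  rw [abs_mul, abs_pow, abs_pow]
  have hx1 : |X s ω| = 1 := by rcases hω s with h | h <;> simp [h]
  rw [hx1, one_pow, one_mul]
  exact pow_le_pow_left₀ (abs_nonneg _) (abs_QQ_le hl hω (s + 1) N) j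

lemma integral_mix (hl : 1 < l) (hmeas : ∀ n, Measurable (X n))
    (hindep : iIndepFun X P)
    (h1 : ∀ n, P {ω | X n ω = 1} = 1 / 2) (h2 : ∀ n, P {ω | X n ω = -1} = 1 / 2)
    (s N i j : ℕ) :
    ∫ ω, X s ω ^ i * QQ X l (s + 1) N ω ^ j ∂P
      = (if Even i then 1 else 0) * ∫ ω, QQ X l (s + 1) N ω ^ j ∂P := by
  have hind := (indepQQ (l := l) hmeas hindep s N).comp
    (measurable_id.pow_const i) (measurable_id.pow_const j)
  have := hind.integral_mul_eq_mul_integral (((hmeas s).pow_const i).aestronglyMeasurable)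
    (((measurable_QQ hmeas (s + 1) N).pow_const j).aestronglyMeasurable)
  simp only [Function.comp_def, id, Pi.mul_apply] at this
  rw [this, integral_X_pow hmeas h1 h2 s i]

lemma QQ_succ (s N : ℕ) (ω : Ω) :
    QQ X l s (N + 1) ω = l⁻¹ * (X s ω + QQ X l (s + 1) N ω) := by
  rw [QQ, Finset.sum_range_succ', QQ, mul_add, Finset.mul_sum, add_comm]
  congr 1
  · rw [coef_eq, show 0 + s = s from by omega]
    ring
  · refine Finset.sum_congr rfl (fun t _ => ?_)
    rw [coef_eq, coef_eq, show t + 1 + s = t + (s + 1) from by omega]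
    ring

lemma moment_rec (hl : 1 < l) (hmeas : ∀ n, Measurable (X n))
    (hindep : iIndepFun X P)
    (h1 : ∀ n, P {ω | X n ω = 1} = 1 / 2) (h2 : ∀ n, P {ω | X n ω = -1} = 1 / 2)
    (s N k : ℕ) :
    ∫ ω, QQ X l s (N + 1) ω ^ k ∂P
      = l⁻¹ ^ k * ∑ i ∈ Finset.range (k + 1),
          (if Even i then (k.choose i : ℝ) else 0) * ∫ ω, QQ X l (s + 1) N ω ^ (k - i) ∂P := by
  have step1 : ∫ ω, QQ X l s (N + 1) ω ^ k ∂P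
      = l⁻¹ ^ k * ∫ ω, (X s ω + QQ X l (s + 1) N ω) ^ k ∂P := by
    simp_rw [QQ_succ (l := l) s N, mul_pow]
    exact integral_const_mul _ _
  rw [step1]
  congr 1
  have expand : ∀ ω, (X s ω + QQ X l (s + 1) N ω) ^ k
      = ∑ i ∈ Finset.range (k + 1),
          X s ω ^ i * QQ X l (s + 1) N ω ^ (k - i) * (k.choose i : ℝ) := fun ω => add_pow _ _ _
  simp_rw [expand]
  rw [integral_finset_sum _ (fun i _ =>
    (integrable_mix hl hmeas h1 h2 s N i (k - i)).mul_const _)]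
  refine Finset.sum_congr rfl (fun i _ => ?_)
  rw [integral_mul_const, integral_mix hl hmeas hindep h1 h2 s N i (k - i)]
  by_cases hi : Even i <;> simp [hi] <;> ring

lemma moment_shift (hl : 1 < l) (hmeas : ∀ n, Measurable (X n))
    (hindep : iIndepFun X P)
    (h1 : ∀ n, P {ω | X n ω = 1} = 1 / 2) (h2 : ∀ n, P {ω | X n ω = -1} = 1 / 2) :
    ∀ N s k, ∫ ω, QQ X l s N ω ^ k ∂P = ∫ ω, QQ X l 0 N ω ^ k ∂P := by
  intro N
  induction N with
  | zero => intro s k; simp [QQ]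
  | succ N ih =>
    intro s k
    rw [moment_rec hl hmeas hindep h1 h2 s N k, moment_rec hl hmeas hindep h1 h2 0 N k]
    congr 1
    refine Finset.sum_congr rfl (fun i _ => ?_)
    rw [ih (s + 1) (k - i), ih 1 (k - i)]

lemma tendsto_QQ (hl : 1 < l) (hmeas : ∀ n, Measurable (X n))
    (h1 : ∀ n, P {ω | X n ω = 1} = 1 / 2) (h2 : ∀ n, P {ω | X n ω = -1} = 1 / 2)
    {Sl : Ω → ℝ} (hS : ∀ ω, Sl ω = ∑' t : ℕ, l ^ (-(t + 1 : ℤ)) * X t ω) :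
    ∀ᵐ ω ∂P, Filter.Tendsto (fun N => QQ X l 0 N ω) Filter.atTop (nhds (Sl ω)) := by
  have hl0 : 0 < l := lt_trans one_pos hl
  have hr0 : 0 ≤ l⁻¹ := inv_nonneg.2 hl0.le
  have hr1 : l⁻¹ < 1 := inv_lt_one_of_one_lt₀ hl
  have hsummable : Summable (fun t : ℕ => l⁻¹ ^ (t + 1)) := by
    simpa [pow_succ'] using (summable_geometric_of_lt_one hr0 hr1).mul_left l⁻¹
  filter_upwards [ae_pm_all hmeas h1 h2] with ω hω
  have hsum : Summable (fun t : ℕ => l ^ (-(t + 1 : ℤ)) * X t ω) := by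
    refine Summable.of_norm_bounded hsummable (fun t => ?_)
    rw [norm_mul, coef_eq]
    have hx1 : ‖X t ω‖ = 1 := by rcases hω t with h | h <;> simp [h]
    rw [hx1, mul_one, norm_pow, Real.norm_eq_abs, abs_of_nonneg hr0]
  have htend := hsum.hasSum.tendsto_sum_nat
  have hqq : (fun N => QQ X l 0 N ω)
      = fun N => ∑ t ∈ Finset.range N, l ^ (-(t + 1 : ℤ)) * X t ω := by
    funext N; simp [QQ]
  rw [hS ω, hqq]
  exact htend

lemma tendsto_moment (hl : 1 < l) (hmeas : ∀ n, Measurable (X n))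
    (h1 : ∀ n, P {ω | X n ω = 1} = 1 / 2) (h2 : ∀ n, P {ω | X n ω = -1} = 1 / 2)
    {Sl : Ω → ℝ} (hS : ∀ ω, Sl ω = ∑' t : ℕ, l ^ (-(t + 1 : ℤ)) * X t ω) (k : ℕ) :
    Filter.Tendsto (fun N => ∫ ω, QQ X l 0 N ω ^ k ∂P) Filter.atTop
      (nhds (∫ ω, Sl ω ^ k ∂P)) := by
  apply tendsto_integral_of_dominated_convergence (fun _ => ((l - 1)⁻¹) ^ k)
  · exact fun N => ((measurable_QQ hmeas 0 N).pow_const k).aestronglyMeasurable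
  · exact integrable_const _
  · intro N
    filter_upwards [ae_pm_all hmeas h1 h2] with ω hω
    rw [norm_pow, Real.norm_eq_abs]
    exact pow_le_pow_left₀ (abs_nonneg _) (abs_QQ_le hl hω 0 N) k
  · filter_upwards [tendsto_QQ hl hmeas h1 h2 hS] with ω hω
    exact hω.pow k

lemma m_recursion (hl : 1 < l) (hmeas : ∀ n, Measurable (X n))
    (hindep : iIndepFun X P)
    (h1 : ∀ n, P {ω | X n ω = 1} = 1 / 2) (h2 : ∀ n, P {ω | X n ω = -1} = 1 / 2)
    {Sl : Ω → ℝ} (hS : ∀ ω, Sl ω = ∑' t : ℕ, l ^ (-(t + 1 : ℤ)) * X t ω) (k : ℕ) :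
    ∫ ω, Sl ω ^ k ∂P
      = l⁻¹ ^ k * ∑ i ∈ Finset.range (k + 1),
          (if Even i then (k.choose i : ℝ) else 0) * ∫ ω, Sl ω ^ (k - i) ∂P := by
  have hA : Filter.Tendsto (fun N => ∫ ω, QQ X l 0 (N + 1) ω ^ k ∂P) Filter.atTop
      (nhds (∫ ω, Sl ω ^ k ∂P)) :=
    (tendsto_moment hl hmeas h1 h2 hS k).comp (Filter.tendsto_add_atTop_nat 1)
  have heq : ∀ N, ∫ ω, QQ X l 0 (N + 1) ω ^ k ∂P
      = l⁻¹ ^ k * ∑ i ∈ Finset.range (k + 1),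
          (if Even i then (k.choose i : ℝ) else 0) * ∫ ω, QQ X l 0 N ω ^ (k - i) ∂P := by
    intro N
    rw [moment_rec hl hmeas hindep h1 h2 0 N k]
    congr 1
    exact Finset.sum_congr rfl (fun i _ => by
      rw [moment_shift hl hmeas hindep h1 h2 N 1 (k - i)])
  have hB : Filter.Tendsto (fun N => ∫ ω, QQ X l 0 (N + 1) ω ^ k ∂P) Filter.atTop
      (nhds (l⁻¹ ^ k * ∑ i ∈ Finset.range (k + 1),
          (if Even i then (k.choose i : ℝ) else 0) * ∫ ω, Sl ω ^ (k - i) ∂P)) := by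
    simp_rw [heq]
    exact (Filter.Tendsto.const_mul _ (tendsto_finset_sum _ (fun i _ =>
      Filter.Tendsto.const_mul _ (tendsto_moment hl hmeas h1 h2 hS (k - i)))))
  exact tendsto_nhds_unique hA hB

lemma even_sum (f : ℕ → ℝ) (n : ℕ) :
    ∑ i ∈ Finset.range (2 * n + 1), (if Even i then f i else 0)
      = ∑ j ∈ Finset.range (n + 1), f (2 * j) := by
  induction n with
  | zero => simp
  | succ n ih =>
    rw [show 2 * (n + 1) + 1 = (2 * n + 1) + 1 + 1 from by ring, Finset.sum_range_succ,
      Finset.sum_range_succ, ih, Finset.sum_range_succ]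
    have h1 : ¬ Even (2 * n + 1) := by simp [Nat.even_add_one, parity_simps]
    have h2 : Even (2 * n + 1 + 1) := ⟨n + 1, by ring⟩
    rw [if_neg h1, if_pos h2, show 2 * n + 1 + 1 = 2 * (n + 1) from by ring,
      Finset.sum_range_succ _ (n + 1), Finset.sum_range_succ _ n]
    ring

lemma one_step (hl : 1 < l) (M : ℕ → ℝ)
    (hrec : ∀ k, M k = l⁻¹ ^ k * ∑ i ∈ Finset.range (k + 1),
      (if Even i then (k.choose i : ℝ) else 0) * M (k - i)) (k : ℕ) :
    l ^ (2 * k) * M (2 * k)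
      = ∑ j ∈ Finset.range (k + 1), ((2 * k).choose (2 * j) : ℝ) * M (2 * j) := by
  have hl0 : l ≠ 0 := by positivity
  have key : l ^ (2 * k) * M (2 * k)
      = ∑ i ∈ Finset.range (2 * k + 1),
          (if Even i then ((2 * k).choose i : ℝ) * M (2 * k - i) else 0) := by
    rw [hrec (2 * k), ← mul_assoc, inv_pow, mul_inv_cancel₀ (pow_ne_zero _ hl0), one_mul]
    exact Finset.sum_congr rfl (fun i _ => by rw [ite_mul, zero_mul])
  rw [key, even_sum (fun i => ((2 * k).choose i : ℝ) * M (2 * k - i)) k]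
  rw [← Finset.sum_range_reflect]
  refine Finset.sum_congr rfl (fun j hj => ?_)
  rw [Finset.mem_range] at hj
  have hj' : j ≤ k := by omega
  have e1 : 2 * (k + 1 - 1 - j) = 2 * k - 2 * j := by omega
  have e2 : 2 * k - (2 * k - 2 * j) = 2 * j := by omega
  have e3 : (2 * k).choose (2 * k - 2 * j) = (2 * k).choose (2 * j) :=
    Nat.choose_symm (by omega)
  rw [e1, e2, e3]

lemma two_step (hl : 1 < l) (M : ℕ → ℝ)
    (hR : ∀ k, l ^ (2 * k) * M (2 * k)
      = ∑ j ∈ Finset.range (k + 1), ((2 * k).choose (2 * j) : ℝ) * M (2 * j)) (n : ℕ) :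
    l ^ (4 * n) * M (2 * n)
      = ∑ j ∈ Finset.range (n + 1), ((2 * n).choose (2 * j) : ℝ) * M (2 * j) *
          ∑ i ∈ Finset.range (n - j + 1), ((2 * (n - j)).choose (2 * i) : ℝ) * l ^ (2 * i) := by
  have hl0 : l ≠ 0 := by positivity
  have step1 : l ^ (4 * n) * M (2 * n)
      = ∑ k ∈ Finset.range (n + 1), ∑ j ∈ Finset.range (k + 1),
          ((2 * n).choose (2 * k) : ℝ) * l ^ (2 * (n - k)) *
            ((2 * k).choose (2 * j) : ℝ) * M (2 * j) := by
    rw [show 4 * n = 2 * n + 2 * n from by ring, pow_add, mul_assoc, hR n, Finset.mul_sum]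
    refine Finset.sum_congr rfl (fun k hk => ?_)
    rw [Finset.mem_range] at hk
    have hk' : k ≤ n := by omega
    have hpow : l ^ (2 * n) = l ^ (2 * (n - k)) * l ^ (2 * k) := by
      rw [← pow_add]; congr 1; omega
    rw [show l ^ (2 * n) * (((2 * n).choose (2 * k) : ℝ) * M (2 * k))
      = ((2 * n).choose (2 * k) : ℝ) * l ^ (2 * (n - k)) * (l ^ (2 * k) * M (2 * k)) from by
        rw [hpow]; ring,
      hR k, Finset.mul_sum]
    exact Finset.sum_congr rfl (fun j _ => by ring)
  rw [step1]
  rw [Finset.sum_comm' (t' := Finset.range (n + 1)) (s' := fun j => Finset.Icc j n)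
    (by intro k j; simp only [Finset.mem_range, Finset.mem_Icc]; omega)]
  refine Finset.sum_congr rfl (fun j hj => ?_)
  rw [Finset.mem_range] at hj
  have hj' : j ≤ n := by omega
  have inner : ∀ k ∈ Finset.Icc j n,
      ((2 * n).choose (2 * k) : ℝ) * l ^ (2 * (n - k)) * ((2 * k).choose (2 * j) : ℝ) * M (2 * j)
      = ((2 * n).choose (2 * j) : ℝ) * M (2 * j) *
          (((2 * (n - j)).choose (2 * (k - j)) : ℝ) * l ^ (2 * (n - k))) := by
    intro k hk
    rw [Finset.mem_Icc] at hk
    have hcc : ((2 * n).choose (2 * k) : ℝ) * ((2 * k).choose (2 * j) : ℝ)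
        = ((2 * n).choose (2 * j) : ℝ) * ((2 * (n - j)).choose (2 * (k - j)) : ℝ) := by
      have := Nat.choose_mul (n := 2 * n) (k := 2 * k) (s := 2 * j) (by omega)
      have e1 : 2 * n - 2 * j = 2 * (n - j) := by omega
      have e2 : 2 * k - 2 * j = 2 * (k - j) := by omega
      rw [e1, e2] at this
      exact_mod_cast congrArg (Nat.cast (R := ℝ)) this
    calc ((2 * n).choose (2 * k) : ℝ) * l ^ (2 * (n - k)) * ((2 * k).choose (2 * j) : ℝ) * M (2 * j)
        = (((2 * n).choose (2 * k) : ℝ) * ((2 * k).choose (2 * j) : ℝ)) *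
            l ^ (2 * (n - k)) * M (2 * j) := by ring
      _ = _ := by rw [hcc]; ring
  rw [Finset.sum_congr rfl inner, ← Finset.mul_sum]
  congr 1
  have hicc : Finset.Icc j n = Finset.Ico j (n + 1) := by
    rw [Finset.Ico_add_one_right_eq_Icc]
  rw [hicc, Finset.sum_Ico_eq_sum_range]
  have hrange : n + 1 - j = (n - j) + 1 := by omega
  rw [hrange, ← Finset.sum_range_reflect]
  refine Finset.sum_congr rfl (fun i hi => ?_)
  rw [Finset.mem_range] at hi
  have e1 : j + (n - j + 1 - 1 - i) - j = n - j - i := by omega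
  have e2 : n - (j + (n - j + 1 - 1 - i)) = i := by omega
  rw [e1, e2]
  have e3 : (2 * (n - j)).choose (2 * (n - j - i)) = (2 * (n - j)).choose (2 * i) := by
    rw [show 2 * (n - j - i) = 2 * (n - j) - 2 * i from by omega]
    exact Nat.choose_symm (by omega)
  rw [e3]

end Stmt5Aux

/-- `m_(2n)(λ) = (λ^(4n) - 1)⁻¹ ∑_{j=0}^{n-1} C(2n,2j) m_(2j)(λ) ∑_{l=0}^{n-j} C(2(n-j),2l) λ^(2l)`. -/
theorem stmt_5 {Ω : Type*} [MeasurableSpace Ω] (P : Measure Ω) [IsProbabilityMeasure P]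
    (X : ℕ → Ω → ℝ) (hmeas : ∀ n, Measurable (X n))
    (hindep : iIndepFun X P)
    (h1 : ∀ n, P {ω | X n ω = 1} = 1 / 2) (h2 : ∀ n, P {ω | X n ω = -1} = 1 / 2)
    (S : ℝ → Ω → ℝ)
    (hS : ∀ l : ℝ, 1 < l → ∀ ω, S l ω = ∑' n : ℕ, l ^ (-(n + 1 : ℤ)) * X n ω)
    (m : ℝ → ℕ → ℝ) (hm : ∀ l k, m l k = ∫ ω, (S l ω) ^ k ∂P)
    (l : ℝ) (hl : 1 < l) (n : ℕ) (hn : 1 ≤ n) :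
    m l (2 * n) = (l ^ (4 * n) - 1)⁻¹ *
      ∑ j ∈ Finset.range n, ((2 * n).choose (2 * j) : ℝ) * m l (2 * j) *
        ∑ i ∈ Finset.range (n - j + 1), ((2 * (n - j)).choose (2 * i) : ℝ) * l ^ (2 * i) := by
  have hSl : ∀ ω, S l ω = ∑' t : ℕ, l ^ (-(t + 1 : ℤ)) * X t ω := fun ω => hS l hl ω
  have hrec : ∀ k, m l k = l⁻¹ ^ k * ∑ i ∈ Finset.range (k + 1),
      (if Even i then (k.choose i : ℝ) else 0) * m l (k - i) := by
    intro k
    rw [hm l k, m_recursion hl hmeas hindep h1 h2 hSl k]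
    congr 1
    exact Finset.sum_congr rfl fun i _ => by rw [hm l (k - i)]
  have h2s := two_step hl (m l) (one_step hl (m l) hrec) n
  have hpow : (1 : ℝ) < l ^ (4 * n) := one_lt_pow₀ hl (by omega)
  have hne : l ^ (4 * n) - 1 ≠ 0 := ne_of_gt (by linarith)
  rw [Finset.sum_range_succ] at h2s
  have hAn : (∑ i ∈ Finset.range (n - n + 1),
      ((2 * (n - n)).choose (2 * i) : ℝ) * l ^ (2 * i)) = 1 := by simp
  rw [hAn, Nat.choose_self] at h2s
  simp only [Nat.cast_one, one_mul, mul_one] at h2s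
  have hkey : (∑ j ∈ Finset.range n, ((2 * n).choose (2 * j) : ℝ) * m l (2 * j) *
      ∑ i ∈ Finset.range (n - j + 1), ((2 * (n - j)).choose (2 * i) : ℝ) * l ^ (2 * i))
      = (l ^ (4 * n) - 1) * m l (2 * n) := by linarith
  rw [hkey, ← mul_assoc, inv_mul_cancel₀ hne, one_mul]
end

section
/- For every λ > 1 and every integer n ≥ 0, m_{2n}(λ) = Σ_{j=0}^{n} C(2n, 2j) · λ^{2j} · m_{2j}(λ²) · m_{2(n−j)}(λ²). -/
open MeasureTheory ProbabilityTheory Finset Filter Topology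

section Aux

variable {Ω : Type*} [MeasurableSpace Ω] {P : Measure Ω} [IsProbabilityMeasure P]
  {X : ℕ → Ω → ℝ}

lemma aux9_ae (hmeas : ∀ n, Measurable (X n))
    (h1 : ∀ n, P {ω | X n ω = 1} = 1 / 2) (h2 : ∀ n, P {ω | X n ω = -1} = 1 / 2) :
    ∀ᵐ ω ∂P, ∀ n, X n ω = 1 ∨ X n ω = -1 := by
  rw [MeasureTheory.ae_all_iff]
  intro n
  have hA : MeasurableSet {ω | X n ω = 1} := (hmeas n) (measurableSet_singleton 1)
  have hB : MeasurableSet {ω | X n ω = -1} := (hmeas n) (measurableSet_singleton (-1))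
  have hd : Disjoint {ω | X n ω = 1} {ω | X n ω = -1} := by
    rw [Set.disjoint_left]
    intro ω hω1 hω2
    simp only [Set.mem_setOf_eq] at hω1 hω2
    rw [hω1] at hω2; norm_num at hω2
  have hU : P ({ω | X n ω = 1} ∪ {ω | X n ω = -1}) = 1 := by
    rw [measure_union hd hB, h1, h2]
    norm_num [ENNReal.inv_two_add_inv_two]
  have : P ({ω | X n ω = 1} ∪ {ω | X n ω = -1})ᶜ = 0 := by
    rw [prob_compl_eq_one_sub (hA.union hB), hU]; simp
  refine measure_mono_null ?_ this
  intro ω hω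
  simp only [Set.mem_compl_iff, Set.mem_union, Set.mem_setOf_eq] at hω ⊢
  tauto

lemma aux9_intpow (hmeas : ∀ n, Measurable (X n))
    (h1 : ∀ n, P {ω | X n ω = 1} = 1 / 2) (h2 : ∀ n, P {ω | X n ω = -1} = 1 / 2)
    (j e : ℕ) :
    ∫ ω, X j ω ^ e ∂P = if Even e then (1:ℝ) else 0 := by
  have hA : MeasurableSet {ω | X j ω = 1} := (hmeas j) (measurableSet_singleton 1)
  have hB : MeasurableSet {ω | X j ω = -1} := (hmeas j) (measurableSet_singleton (-1))
  have hcong : (fun ω => X j ω ^ e) =ᵐ[P]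
      (fun ω => Set.indicator {ω | X j ω = 1} (fun _ => (1:ℝ)) ω
        + Set.indicator {ω | X j ω = -1} (fun _ => (-1:ℝ)^e) ω) := by
    filter_upwards [aux9_ae hmeas h1 h2] with ω hω
    rcases hω j with h | h
    · rw [h, Set.indicator_of_mem (by exact h),
        Set.indicator_of_notMem (by simp [Set.mem_setOf_eq, h]; norm_num)]
      simp
    · rw [h, Set.indicator_of_notMem (by simp [Set.mem_setOf_eq, h]; norm_num),
        Set.indicator_of_mem (by exact h)]
      simp
  rw [integral_congr_ae hcong,
    integral_add ((integrable_const _).indicator hA) ((integrable_const _).indicator hB),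
    integral_indicator_const _ hA, integral_indicator_const _ hB, measureReal_def, measureReal_def, h1 j, h2 j]
  have h12 : ((1/2 : ENNReal)).toReal = (1/2 : ℝ) := by norm_num
  rw [h12]
  by_cases he : Even e
  · rw [if_pos he, he.neg_one_pow]
    norm_num
  · rw [if_neg he, (Nat.not_even_iff_odd.1 he).neg_one_pow]
    norm_num

lemma aux9_abs (hmeas : ∀ n, Measurable (X n))
    (h1 : ∀ n, P {ω | X n ω = 1} = 1 / 2) (h2 : ∀ n, P {ω | X n ω = -1} = 1 / 2) :
    ∀ᵐ ω ∂P, ∀ n, |X n ω| = 1 := by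
  filter_upwards [aux9_ae hmeas h1 h2] with ω hω n
  rcases hω n with h | h <;> rw [h] <;> norm_num

lemma aux9_integrable {f : Ω → ℝ} (hf : Measurable f) (C : ℝ)
    (hb : ∀ᵐ ω ∂P, ‖f ω‖ ≤ C) : Integrable f P :=
  (MemLp.of_bound (p := 1) hf.aestronglyMeasurable C hb).integrable le_rfl

lemma aux9_intprod (hmeas : ∀ n, Measurable (X n))
    (hindep : iIndepFun X P)
    (h1 : ∀ n, P {ω | X n ω = 1} = 1 / 2) (h2 : ∀ n, P {ω | X n ω = -1} = 1 / 2)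
    (σ : ℕ → ℕ) (hσ : Function.Injective σ) (k : ℕ → ℕ) (s : Finset ℕ) :
    ∫ ω, ∏ i ∈ s, X (σ i) ω ^ k i ∂P = ∏ i ∈ s, if Even (k i) then (1:ℝ) else 0 := by
  classical
  induction s using Finset.induction with
  | empty => simp
  | @insert a s ha ih =>
    have hint1 : Integrable (fun ω => X (σ a) ω ^ k a) P := by
      refine aux9_integrable ((hmeas (σ a)).pow_const _) 1 ?_
      filter_upwards [aux9_abs hmeas h1 h2] with ω hω
      rw [Real.norm_eq_abs, abs_pow, hω (σ a), one_pow]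
    have hint2 : Integrable (fun ω => ∏ i ∈ s, X (σ i) ω ^ k i) P := by
      refine aux9_integrable (Finset.measurable_prod _ fun i _ => (hmeas (σ i)).pow_const _) 1 ?_
      filter_upwards [aux9_abs hmeas h1 h2] with ω hω
      rw [Real.norm_eq_abs, Finset.abs_prod]
      refine Finset.prod_le_one (fun i _ => abs_nonneg _) (fun i _ => ?_)
      rw [abs_pow, hω (σ i), one_pow]
    have hdisj : Disjoint ({σ a} : Finset ℕ) (s.image σ) := by
      rw [Finset.disjoint_left]
      intro b hb hbi
      rw [Finset.mem_singleton] at hb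
      obtain ⟨c, hc, hcb⟩ := Finset.mem_image.1 hbi
      exact ha (by rwa [← hσ (hcb.trans hb)])
    have hInd : IndepFun (fun ω => X (σ a) ω ^ k a)
        (fun ω => ∏ i ∈ s, X (σ i) ω ^ k i) P := by
      have h := hindep.indepFun_finset {σ a} (s.image σ) hdisj hmeas
      have hF : Measurable (fun v : (({σ a} : Finset ℕ) → ℝ) =>
          v ⟨σ a, Finset.mem_singleton_self _⟩ ^ k a) :=
        (measurable_pi_apply _).pow_const _
      have hG : Measurable (fun v : (((s.image σ) : Finset ℕ) → ℝ) =>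
          ∏ i ∈ s.attach, v ⟨σ i, Finset.mem_image_of_mem σ i.2⟩ ^ k i) :=
        Finset.measurable_prod _ (fun i _ => (measurable_pi_apply _).pow_const _)
      have h2' := h.comp hF hG
      have hfun : (fun ω => ∏ i ∈ s, X (σ i) ω ^ k i)
          = (fun v : (((s.image σ) : Finset ℕ) → ℝ) =>
              ∏ i ∈ s.attach, v ⟨σ i, Finset.mem_image_of_mem σ i.2⟩ ^ k i)
            ∘ (fun ω (i : ((s.image σ) : Finset ℕ)) => X i ω) := by
        funext ω
        simp only [Function.comp_apply]
        rw [← Finset.prod_attach s (fun i => X (σ i) ω ^ k i)]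
      rw [hfun]
      exact h2'
    have hmul := IndepFun.integral_fun_mul_eq_mul_integral hInd hint1.aestronglyMeasurable hint2.aestronglyMeasurable
    simp only [Finset.prod_insert ha]
    calc ∫ ω, X (σ a) ω ^ k a * ∏ i ∈ s, X (σ i) ω ^ k i ∂P
        = (∫ ω, X (σ a) ω ^ k a ∂P) * ∫ ω, ∏ i ∈ s, X (σ i) ω ^ k i ∂P := hmul
      _ = (if Even (k a) then (1:ℝ) else 0) * ∏ i ∈ s, if Even (k i) then (1:ℝ) else 0 := by
          rw [aux9_intpow hmeas h1 h2, ih]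

lemma aux9_moment (hmeas : ∀ n, Measurable (X n))
    (hindep : iIndepFun X P)
    (h1 : ∀ n, P {ω | X n ω = 1} = 1 / 2) (h2 : ∀ n, P {ω | X n ω = -1} = 1 / 2)
    (σ : ℕ → ℕ) (hσ : Function.Injective σ) (c : ℕ → ℝ) (N q : ℕ) :
    ∫ ω, (∑ i ∈ Finset.range N, c i * X (σ i) ω) ^ q ∂P
      = ∑ k ∈ Finset.piAntidiag (Finset.range N) q,
          ((Nat.multinomial (Finset.range N) k : ℝ) * ∏ i ∈ Finset.range N, c i ^ k i) *
            ∏ i ∈ Finset.range N, (if Even (k i) then (1:ℝ) else 0) := by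
  classical
  have hexp : ∀ ω, (∑ i ∈ Finset.range N, c i * X (σ i) ω) ^ q
      = ∑ k ∈ Finset.piAntidiag (Finset.range N) q,
          ((Nat.multinomial (Finset.range N) k : ℝ) * ∏ i ∈ Finset.range N, c i ^ k i) *
            ∏ i ∈ Finset.range N, X (σ i) ω ^ k i := by
    intro ω
    rw [Finset.sum_pow_eq_sum_piAntidiag]
    refine Finset.sum_congr rfl fun k hk => ?_
    rw [mul_assoc]
    congr 1
    rw [← Finset.prod_mul_distrib]
    exact Finset.prod_congr rfl fun i _ => mul_pow _ _ _
  simp_rw [hexp]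
  rw [integral_finset_sum]
  · refine Finset.sum_congr rfl fun k hk => ?_
    rw [MeasureTheory.integral_const_mul,
      aux9_intprod hmeas hindep h1 h2 σ hσ k (Finset.range N)]
  · intro k hk
    refine Integrable.const_mul ?_ _
    refine aux9_integrable (Finset.measurable_prod _ fun i _ => (hmeas (σ i)).pow_const _) 1 ?_
    filter_upwards [aux9_abs hmeas h1 h2] with ω hω
    rw [Real.norm_eq_abs, Finset.abs_prod]
    refine Finset.prod_le_one (fun i _ => abs_nonneg _) (fun i _ => ?_)
    rw [abs_pow, hω (σ i), one_pow]

lemma aux9_moment_eq (hmeas : ∀ n, Measurable (X n))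
    (hindep : iIndepFun X P)
    (h1 : ∀ n, P {ω | X n ω = 1} = 1 / 2) (h2 : ∀ n, P {ω | X n ω = -1} = 1 / 2)
    (σ : ℕ → ℕ) (hσ : Function.Injective σ) (c : ℕ → ℝ) (N q : ℕ) :
    ∫ ω, (∑ i ∈ Finset.range N, c i * X (σ i) ω) ^ q ∂P
      = ∫ ω, (∑ i ∈ Finset.range N, c i * X i ω) ^ q ∂P := by
  rw [aux9_moment hmeas hindep h1 h2 σ hσ c N q,
    ← aux9_moment hmeas hindep h1 h2 id Function.injective_id c N q]
  rfl

lemma aux9_moment_odd (hmeas : ∀ n, Measurable (X n))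
    (hindep : iIndepFun X P)
    (h1 : ∀ n, P {ω | X n ω = 1} = 1 / 2) (h2 : ∀ n, P {ω | X n ω = -1} = 1 / 2)
    (σ : ℕ → ℕ) (hσ : Function.Injective σ) (c : ℕ → ℝ) (N q : ℕ) (hq : ¬ Even q) :
    ∫ ω, (∑ i ∈ Finset.range N, c i * X (σ i) ω) ^ q ∂P = 0 := by
  rw [aux9_moment hmeas hindep h1 h2 σ hσ c N q]
  refine Finset.sum_eq_zero fun k hk => ?_
  rw [Finset.mem_piAntidiag] at hk
  have : ∃ i ∈ Finset.range N, ¬ Even (k i) := by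
    by_contra h
    push_neg at h
    exact hq (hk.1 ▸ Finset.even_sum _ fun i hi => h i hi)
  obtain ⟨i, hi, hie⟩ := this
  have hz : (∏ i ∈ Finset.range N, (if Even (k i) then (1:ℝ) else 0)) = 0 :=
    Finset.prod_eq_zero hi (if_neg hie)
  rw [hz, mul_zero]

lemma aux9_zpow (a : ℝ) (k : ℕ) : a ^ (-((k:ℤ) + 1)) = (a⁻¹) ^ (k+1) := by
  rw [show -((k:ℤ)+1) = -(((k+1 : ℕ)) : ℤ) by push_cast; ring, zpow_neg, zpow_natCast, inv_pow]

lemma aux9_tendsto (hmeas : ∀ n, Measurable (X n))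
    (h1 : ∀ n, P {ω | X n ω = 1} = 1 / 2) (h2 : ∀ n, P {ω | X n ω = -1} = 1 / 2)
    {l' : ℝ} (hl' : 1 < l') (q : ℕ) :
    Tendsto (fun N => ∫ ω, (∑ k ∈ Finset.range N, l' ^ (-((k:ℤ)+1)) * X k ω) ^ q ∂P) atTop
      (𝓝 (∫ ω, (∑' k : ℕ, l' ^ (-((k:ℤ)+1)) * X k ω) ^ q ∂P)) := by
  have hl0 : (0:ℝ) < l' := lt_trans one_pos hl'
  set t : ℝ := l'⁻¹ with hts
  have ht0 : 0 < t := inv_pos.2 hl0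
  have ht1 : t < 1 := inv_lt_one_of_one_lt₀ hl'
  have hsum : Summable (fun k : ℕ => t ^ (k+1)) := by
    have h := (summable_geometric_of_lt_one ht0.le ht1).mul_left t
    refine h.congr fun k => ?_
    rw [← pow_succ']
  set B : ℝ := ∑' k : ℕ, t ^ (k+1) with hB
  have habs : ∀ ω, (∀ n, |X n ω| = 1) → ∀ N,
      |∑ k ∈ Finset.range N, l' ^ (-((k:ℤ)+1)) * X k ω| ≤ B := by
    intro ω hω N
    calc |∑ k ∈ Finset.range N, l' ^ (-((k:ℤ)+1)) * X k ω|
        ≤ ∑ k ∈ Finset.range N, |l' ^ (-((k:ℤ)+1)) * X k ω| :=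
          Finset.abs_sum_le_sum_abs _ _
      _ = ∑ k ∈ Finset.range N, t ^ (k+1) := by
          refine Finset.sum_congr rfl fun k _ => ?_
          rw [abs_mul, hω k, mul_one, aux9_zpow, abs_of_pos (pow_pos ht0 _)]
      _ ≤ B := Summable.sum_le_tsum (Finset.range N) (fun k _ => (pow_pos ht0 _).le) hsum
  refine MeasureTheory.tendsto_integral_of_dominated_convergence (fun _ => B ^ q)
    (fun N => ((Finset.measurable_sum _ fun k _ =>
      (hmeas k).const_mul _).pow_const q).aestronglyMeasurable)
    (integrable_const _) (fun N => ?_) ?_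
  · filter_upwards [aux9_abs hmeas h1 h2] with ω hω
    rw [Real.norm_eq_abs, abs_pow]
    exact pow_le_pow_left₀ (abs_nonneg _) (habs ω hω N) q
  · filter_upwards [aux9_abs hmeas h1 h2] with ω hω
    have hsum2 : Summable (fun k : ℕ => l' ^ (-((k:ℤ)+1)) * X k ω) := by
      refine Summable.of_norm_bounded hsum (fun k => ?_)
      rw [Real.norm_eq_abs, abs_mul, hω k, mul_one, aux9_zpow, abs_of_pos (pow_pos ht0 _)]
    exact (hsum2.hasSum.tendsto_sum_nat).pow q

lemma aux9_sum_split (f : ℕ → ℝ) (n : ℕ) :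
    ∑ i ∈ Finset.range (2*n+1), f i
      = ∑ j ∈ Finset.range (n+1), f (2*j) + ∑ j ∈ Finset.range n, f (2*j+1) := by
  induction n with
  | zero => simp
  | succ n ih =>
    rw [show 2*(n+1)+1 = (2*n+1)+1+1 by ring, Finset.sum_range_succ, Finset.sum_range_succ, ih,
      Finset.sum_range_succ (f := fun j => f (2*j)) (n := n+1),
      Finset.sum_range_succ (f := fun j => f (2*j+1)) (n := n),
      show (2*n+1)+1 = 2*(n+1) by ring]
    ring

lemma aux9_key (hmeas : ∀ n, Measurable (X n))
    (hindep : iIndepFun X P)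
    (h1 : ∀ n, P {ω | X n ω = 1} = 1 / 2) (h2 : ∀ n, P {ω | X n ω = -1} = 1 / 2)
    {l : ℝ} (hl : 1 < l) (n N : ℕ) :
    ∫ ω, (∑ k ∈ Finset.range (2*N), l ^ (-((k:ℤ)+1)) * X k ω) ^ (2*n) ∂P
      = ∑ j ∈ Finset.range (n+1), ((2*n).choose (2*j) : ℝ) * l^(2*j) *
          (∫ ω, (∑ k ∈ Finset.range N, (l^2) ^ (-((k:ℤ)+1)) * X k ω) ^ (2*j) ∂P) *
          (∫ ω, (∑ k ∈ Finset.range N, (l^2) ^ (-((k:ℤ)+1)) * X k ω) ^ (2*(n-j)) ∂P) := by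
  classical
  have hl0 : (0:ℝ) < l := lt_trans one_pos hl
  have hlne : l ≠ 0 := ne_of_gt hl0
  set c : ℕ → ℝ := fun k => (l^2) ^ (-((k:ℤ)+1)) with hc
  set A : Ω → ℝ := fun ω => ∑ k ∈ Finset.range N, c k * X (2*k) ω with hA
  set B : Ω → ℝ := fun ω => ∑ k ∈ Finset.range N, c k * X (2*k+1) ω with hB
  -- coefficient identities
  have e0 : ∀ k : ℕ, c k = (l⁻¹)^(2*k+2) := by
    intro k
    rw [hc]
    show (l^2) ^ (-((k:ℤ)+1)) = _
    rw [aux9_zpow, ← inv_pow, ← pow_mul, show 2*(k+1) = 2*k+2 by ring]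
  have e1 : ∀ k : ℕ, l ^ (-(((2*k : ℕ) : ℤ) + 1)) = l * c k := by
    intro k
    rw [aux9_zpow, e0 k]
    have hx : l * l⁻¹ ^ (2*k+2) = (l * l⁻¹) * l⁻¹ ^ (2*k+1) := by ring
    rw [hx, mul_inv_cancel₀ hlne, one_mul]
  have e2 : ∀ k : ℕ, l ^ (-(((2*k+1 : ℕ) : ℤ) + 1)) = c k := by
    intro k
    rw [aux9_zpow, e0 k]
  -- splitting of partial sums into even and odd parts
  have hsplit : ∀ (M : ℕ) (ω : Ω), ∑ k ∈ Finset.range (2*M), l ^ (-((k:ℤ)+1)) * X k ω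
      = l * (∑ k ∈ Finset.range M, c k * X (2*k) ω) + ∑ k ∈ Finset.range M, c k * X (2*k+1) ω := by
    intro M ω
    induction M with
    | zero => simp
    | succ M ih =>
      rw [show 2*(M+1) = (2*M)+1+1 by ring, Finset.sum_range_succ, Finset.sum_range_succ, ih,
        Finset.sum_range_succ (f := fun k => c k * X (2*k) ω),
        Finset.sum_range_succ (f := fun k => c k * X (2*k+1) ω), e1 M, e2 M]
      ring
  -- bounds
  have hcb : ∀ k, |c k| ≤ 1 := by
    intro k
    rw [e0 k, abs_pow]
    refine pow_le_one₀ (abs_nonneg _) ?_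
    rw [abs_of_pos (inv_pos.2 hl0)]
    exact le_of_lt (inv_lt_one_of_one_lt₀ hl)
  have hABb : ∀ᵐ ω ∂P, |A ω| ≤ N ∧ |B ω| ≤ N := by
    filter_upwards [aux9_abs hmeas h1 h2] with ω hω
    constructor
    · calc |A ω| ≤ ∑ k ∈ Finset.range N, |c k * X (2*k) ω| := Finset.abs_sum_le_sum_abs _ _
        _ ≤ ∑ k ∈ Finset.range N, 1 := by
            refine Finset.sum_le_sum fun k _ => ?_
            rw [abs_mul, hω (2*k), mul_one]
            exact hcb k
        _ = N := by simp
    · calc |B ω| ≤ ∑ k ∈ Finset.range N, |c k * X (2*k+1) ω| := Finset.abs_sum_le_sum_abs _ _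
        _ ≤ ∑ k ∈ Finset.range N, 1 := by
            refine Finset.sum_le_sum fun k _ => ?_
            rw [abs_mul, hω (2*k+1), mul_one]
            exact hcb k
        _ = N := by simp
  have hmA : Measurable A := Finset.measurable_sum _ fun k _ => (hmeas (2*k)).const_mul _
  have hmB : Measurable B := Finset.measurable_sum _ fun k _ => (hmeas (2*k+1)).const_mul _
  set M0 : ℝ := (|l|+1)*(N+1) with hM0
  have hM0nn : (0:ℝ) ≤ M0 := by positivity
  have hlA : ∀ᵐ ω ∂P, |l * A ω| ≤ M0 ∧ |B ω| ≤ M0 := by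
    filter_upwards [hABb] with ω hω
    have hN : (N:ℝ) ≤ N+1 := by linarith
    constructor
    · rw [abs_mul]
      calc |l| * |A ω| ≤ (|l|+1) * (N+1) := by
            refine mul_le_mul (by linarith) (le_trans hω.1 hN) (abs_nonneg _) (by positivity)
      _ = M0 := rfl
    · calc |B ω| ≤ (N:ℝ) := hω.2
        _ ≤ M0 := by
          rw [hM0]
          nlinarith [abs_nonneg l, (Nat.cast_nonneg N : (0:ℝ) ≤ N)]
  -- integrability of the binomial terms
  have hterm_int : ∀ i ∈ Finset.range (2*n+1),
      Integrable (fun ω => (l * A ω)^i * B ω^(2*n-i) * ((2*n).choose i : ℝ)) P := by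
    intro i hi
    have hile : i ≤ 2*n := by
      rw [Finset.mem_range] at hi; omega
    refine Integrable.mul_const ?_ _
    refine aux9_integrable (((hmA.const_mul l).pow_const i).mul (hmB.pow_const (2*n-i)))
      (M0 ^ (2*n)) ?_
    filter_upwards [hlA] with ω hω
    rw [Real.norm_eq_abs, abs_mul, abs_pow, abs_pow]
    calc |l * A ω| ^ i * |B ω| ^ (2*n-i) ≤ M0 ^ i * M0 ^ (2*n-i) :=
          mul_le_mul (pow_le_pow_left₀ (abs_nonneg _) hω.1 i)
            (pow_le_pow_left₀ (abs_nonneg _) hω.2 _) (by positivity) (by positivity)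
      _ = M0 ^ (2*n) := by rw [← pow_add]; congr 1; omega
  -- independence of A^i and B^j
  have hIndAB : ∀ i j : ℕ, IndepFun (fun ω => A ω ^ i) (fun ω => B ω ^ j) P := by
    intro i j
    set SE : Finset ℕ := (Finset.range N).image (fun k => 2*k) with hSE
    set SO : Finset ℕ := (Finset.range N).image (fun k => 2*k+1) with hSO
    have hdisj : Disjoint SE SO := by
      rw [Finset.disjoint_left]
      intro b hb hb'
      obtain ⟨u, _, hu⟩ := Finset.mem_image.1 hb
      obtain ⟨v, _, hv⟩ := Finset.mem_image.1 hb'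
      omega
    have h := hindep.indepFun_finset SE SO hdisj hmeas
    have hF : Measurable (fun v : ({x // x ∈ SE} → ℝ) =>
        (∑ k ∈ (Finset.range N).attach,
          c k * v ⟨2*(k:ℕ), Finset.mem_image_of_mem _ k.2⟩) ^ i) := by
      fun_prop
    have hG : Measurable (fun v : ({x // x ∈ SO} → ℝ) =>
        (∑ k ∈ (Finset.range N).attach,
          c k * v ⟨2*(k:ℕ)+1, Finset.mem_image_of_mem _ k.2⟩) ^ j) := by
      fun_prop
    have h2' := h.comp hF hG
    have hfunA : (fun ω => A ω ^ i)
        = (fun v : ({x // x ∈ SE} → ℝ) =>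
            (∑ k ∈ (Finset.range N).attach,
              c k * v ⟨2*(k:ℕ), Finset.mem_image_of_mem _ k.2⟩) ^ i)
          ∘ (fun ω (x : {x // x ∈ SE}) => X x.1 ω) := by
      funext ω
      simp only [Function.comp_apply, hA]
      rw [← Finset.sum_attach (Finset.range N) (fun k => c k * X (2*k) ω)]
    have hfunB : (fun ω => B ω ^ j)
        = (fun v : ({x // x ∈ SO} → ℝ) =>
            (∑ k ∈ (Finset.range N).attach,
              c k * v ⟨2*(k:ℕ)+1, Finset.mem_image_of_mem _ k.2⟩) ^ j)
          ∘ (fun ω (x : {x // x ∈ SO}) => X x.1 ω) := by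
      funext ω
      simp only [Function.comp_apply, hB]
      rw [← Finset.sum_attach (Finset.range N) (fun k => c k * X (2*k+1) ω)]
    rw [hfunA, hfunB]
    exact h2'
  -- moments of A and B equal moments of the reference sum
  have hmomA : ∀ q : ℕ, ∫ ω, A ω ^ q ∂P = ∫ ω, (∑ k ∈ Finset.range N, c k * X k ω) ^ q ∂P := by
    intro q
    exact aux9_moment_eq hmeas hindep h1 h2 (fun k => 2*k) (fun a b h => Nat.eq_of_mul_eq_mul_left two_pos h) c N q
  have hmomB : ∀ q : ℕ, ∫ ω, B ω ^ q ∂P = ∫ ω, (∑ k ∈ Finset.range N, c k * X k ω) ^ q ∂P := by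
    intro q
    exact aux9_moment_eq hmeas hindep h1 h2 (fun k => 2*k+1) (fun a b h => by have h' : 2*a+1 = 2*b+1 := h; omega) c N q
  have hintApow : ∀ q : ℕ, Integrable (fun ω => A ω ^ q) P := by
    intro q
    refine aux9_integrable (hmA.pow_const q) ((N:ℝ) ^ q) ?_
    filter_upwards [hABb] with ω hω
    rw [Real.norm_eq_abs, abs_pow]
    exact pow_le_pow_left₀ (abs_nonneg _) hω.1 q
  have hintBpow : ∀ q : ℕ, Integrable (fun ω => B ω ^ q) P := by
    intro q
    refine aux9_integrable (hmB.pow_const q) ((N:ℝ) ^ q) ?_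
    filter_upwards [hABb] with ω hω
    rw [Real.norm_eq_abs, abs_pow]
    exact pow_le_pow_left₀ (abs_nonneg _) hω.2 q
  -- main computation
  set J : ℕ → ℝ := fun q => ∫ ω, (∑ k ∈ Finset.range N, c k * X k ω) ^ q ∂P with hJ
  have hJodd : ∀ q : ℕ, ¬ Even q → J q = 0 := by
    intro q hq
    exact aux9_moment_odd hmeas hindep h1 h2 id Function.injective_id c N q hq
  have step1 : ∫ ω, (∑ k ∈ Finset.range (2*N), l ^ (-((k:ℤ)+1)) * X k ω) ^ (2*n) ∂P
      = ∑ i ∈ Finset.range (2*n+1), (l^i * ((2*n).choose i : ℝ)) * (J i * J (2*n-i)) := by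
    have hptw : ∀ ω, (∑ k ∈ Finset.range (2*N), l ^ (-((k:ℤ)+1)) * X k ω) ^ (2*n)
        = ∑ i ∈ Finset.range (2*n+1), (l * A ω)^i * B ω^(2*n-i) * ((2*n).choose i : ℝ) := by
      intro ω
      rw [hsplit N ω, add_pow]
    rw [integral_congr_ae (Filter.Eventually.of_forall hptw), integral_finset_sum _ hterm_int]
    refine Finset.sum_congr rfl fun i hi => ?_
    have hptw2 : ∀ ω, (l * A ω)^i * B ω^(2*n-i) * ((2*n).choose i : ℝ)
        = (l^i * ((2*n).choose i : ℝ)) * (A ω ^ i * B ω ^ (2*n-i)) := by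
      intro ω
      rw [mul_pow]
      ring
    have hmul := IndepFun.integral_fun_mul_eq_mul_integral (hIndAB i (2*n-i)) (hintApow i).aestronglyMeasurable (hintBpow (2*n-i)).aestronglyMeasurable
    calc ∫ ω, (l * A ω)^i * B ω^(2*n-i) * ((2*n).choose i : ℝ) ∂P
        = (l^i * ((2*n).choose i : ℝ)) * ∫ ω, A ω ^ i * B ω ^ (2*n-i) ∂P := by
          rw [integral_congr_ae (Filter.Eventually.of_forall hptw2),
            MeasureTheory.integral_const_mul]
      _ = (l^i * ((2*n).choose i : ℝ)) * ((∫ ω, A ω ^ i ∂P) * ∫ ω, B ω ^ (2*n-i) ∂P) := by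
          rw [show (∫ ω, A ω ^ i * B ω ^ (2*n-i) ∂P)
            = (∫ ω, A ω ^ i ∂P) * ∫ ω, B ω ^ (2*n-i) ∂P from hmul]
      _ = (l^i * ((2*n).choose i : ℝ)) * (J i * J (2*n-i)) := by
          rw [hmomA i, hmomB (2*n-i)]
  rw [step1, aux9_sum_split (fun i => (l^i * ((2*n).choose i : ℝ)) * (J i * J (2*n-i))) n]
  have hoddzero : ∑ j ∈ Finset.range n,
      (l^(2*j+1) * ((2*n).choose (2*j+1) : ℝ)) * (J (2*j+1) * J (2*n-(2*j+1))) = 0 := by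
    refine Finset.sum_eq_zero fun j hj => ?_
    rw [hJodd (2*j+1) (by simp [Nat.even_add_one, parity_simps]), zero_mul, mul_zero]
  rw [hoddzero, add_zero]
  refine Finset.sum_congr rfl fun j hj => ?_
  rw [Finset.mem_range] at hj
  rw [show 2*n - 2*j = 2*(n-j) by omega]
  ring

end Aux

/-- `m_(2n)(λ) = ∑_{j=0}^{n} C(2n,2j) λ^(2j) m_(2j)(λ²) m_(2(n-j))(λ²)`. -/
theorem stmt_9 {Ω : Type*} [MeasurableSpace Ω] (P : Measure Ω) [IsProbabilityMeasure P]
    (X : ℕ → Ω → ℝ) (hmeas : ∀ n, Measurable (X n))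
    (hindep : iIndepFun X P)
    (h1 : ∀ n, P {ω | X n ω = 1} = 1 / 2) (h2 : ∀ n, P {ω | X n ω = -1} = 1 / 2)
    (S : ℝ → Ω → ℝ)
    (hS : ∀ l : ℝ, 1 < l → ∀ ω, S l ω = ∑' n : ℕ, l ^ (-(n + 1 : ℤ)) * X n ω)
    (m : ℝ → ℕ → ℝ) (hm : ∀ l k, m l k = ∫ ω, (S l ω) ^ k ∂P)
    (l : ℝ) (hl : 1 < l) (n : ℕ) :
    m l (2 * n) = ∑ j ∈ Finset.range (n + 1),
      ((2 * n).choose (2 * j) : ℝ) * l ^ (2 * j) * m (l ^ 2) (2 * j) * m (l ^ 2) (2 * (n - j)) := by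
  have hl0 : (0:ℝ) < l := lt_trans one_pos hl
  have hl2 : 1 < l^2 := by nlinarith
  have hm1 : m l (2*n) = ∫ ω, (∑' k : ℕ, l ^ (-((k:ℤ)+1)) * X k ω) ^ (2*n) ∂P := by
    rw [hm]
    exact integral_congr_ae (Filter.Eventually.of_forall fun ω => by simp only [hS l hl])
  have hm2 : ∀ q, m (l^2) q = ∫ ω, (∑' k : ℕ, (l^2) ^ (-((k:ℤ)+1)) * X k ω) ^ q ∂P := by
    intro q
    rw [hm]
    exact integral_congr_ae (Filter.Eventually.of_forall fun ω => by simp only [hS (l^2) hl2])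
  have hdouble : Tendsto (fun N : ℕ => 2*N) atTop atTop :=
    tendsto_atTop_mono (fun N => Nat.le_mul_of_pos_left N two_pos) tendsto_id
  have hL : Tendsto
      (fun N => ∫ ω, (∑ k ∈ Finset.range (2*N), l ^ (-((k:ℤ)+1)) * X k ω) ^ (2*n) ∂P)
      atTop (𝓝 (m l (2*n))) := by
    rw [hm1]
    exact (aux9_tendsto hmeas h1 h2 hl (2*n)).comp hdouble
  have hI2 : ∀ q, Tendsto
      (fun N => ∫ ω, (∑ k ∈ Finset.range N, (l^2) ^ (-((k:ℤ)+1)) * X k ω) ^ q ∂P)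
      atTop (𝓝 (m (l^2) q)) := by
    intro q
    rw [hm2 q]
    exact aux9_tendsto hmeas h1 h2 hl2 q
  have hR : Tendsto (fun N => ∑ j ∈ Finset.range (n+1), ((2*n).choose (2*j) : ℝ) * l^(2*j) *
      (∫ ω, (∑ k ∈ Finset.range N, (l^2) ^ (-((k:ℤ)+1)) * X k ω) ^ (2*j) ∂P) *
      (∫ ω, (∑ k ∈ Finset.range N, (l^2) ^ (-((k:ℤ)+1)) * X k ω) ^ (2*(n-j)) ∂P))
      atTop (𝓝 (∑ j ∈ Finset.range (n+1), ((2*n).choose (2*j) : ℝ) * l^(2*j) *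
        m (l^2) (2*j) * m (l^2) (2*(n-j)))) := by
    refine tendsto_finset_sum _ fun j hj => ?_
    exact ((hI2 (2*j)).const_mul _).mul (hI2 (2*(n-j)))
  have hL' := hL.congr (fun N => aux9_key hmeas hindep h1 h2 hl n N)
  exact tendsto_nhds_unique hL' hR
end
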